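/- The ring ℤ[i,φ] is norm-Euclidean: for every α ∈ K = ℚ(i,√5) there exists β ∈ ℤ[i,φ] such that |N_{K/ℚ}(α − β)| < 1. In particular, ℤ[i,φ] is a Euclidean domain with respect to the Euclidean function α ↦ |N_{K/ℚ}(α)|. -/

import Mathlib

/-- `K = ℚ(i, √5)` as an intermediate field of `ℂ/ℚ`. -/
noncomputable def K : IntermediateField ℚ ℂ :=
  IntermediateField.adjoin ℚ {Complex.I, (Real.sqrt 5 : ℂ)}

/-- `i` as an element of `K`. -/
noncomputable def iK : K := ⟨Complex.I, IntermediateField.subset_adjoin ℚ _ (by simp)⟩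

/-- `√5` as an element of `K`. -/
noncomputable def sqrt5K : K := ⟨(Real.sqrt 5 : ℂ), IntermediateField.subset_adjoin ℚ _ (by simp)⟩

/-- The golden ratio `φ = (1 + √5)/2` as an element of `K`. -/
noncomputable def phiK : K := (1 + sqrt5K) / 2

/-- `ℤ[i,φ]`, the subring of `K` generated by `i` and `φ`
(equivalently, the `ℤ`-span of `{1, φ, i, iφ}`). -/
noncomputable def Ziphi : Subring K := Subring.closure {iK, phiK}

noncomputable def grC : ℂ := (1 + (Real.sqrt 5 : ℂ)) / 2

lemma sqrt5C_sq : (Real.sqrt 5 : ℂ)^2 = 5 := by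
  rw [← Complex.ofReal_pow, Real.sq_sqrt (by norm_num : (5:ℝ) ≥ 0)]; norm_num
lemma grC_sq : grC^2 = grC + 1 := by
  unfold grC; linear_combination (1/4) * sqrt5C_sq

noncomputable def vC : Fin 4 → ℂ := ![1, grC, Complex.I, Complex.I * grC]

noncomputable def SP : Submodule ℚ ℂ := Submodule.span ℚ (Set.range vC)

lemma mem0 : (1:ℂ) ∈ SP := Submodule.subset_span ⟨0, rfl⟩
lemma mem1 : grC ∈ SP := Submodule.subset_span ⟨1, rfl⟩
lemma mem2 : Complex.I ∈ SP := Submodule.subset_span ⟨2, rfl⟩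
lemma mem3 : Complex.I * grC ∈ SP := Submodule.subset_span ⟨3, rfl⟩

lemma prods_mem : ∀ i j : Fin 4, vC i * vC j ∈ SP := by
  intro i j
  fin_cases i <;> fin_cases j <;> norm_num [vC]
  · exact mem0
  · exact mem1
  · exact mem2
  · exact mem3
  · exact mem1
  · rw [show grC * grC = 1 + grC by linear_combination grC_sq]
    exact add_mem mem0 mem1
  · rw [mul_comm]; exact mem3
  · rw [show grC * (Complex.I * grC) = Complex.I + Complex.I * grC by
      linear_combination Complex.I * grC_sq]
    exact add_mem mem2 mem3
  · exact mem2
  · exact mem3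
  · exact mem0
  · rw [show Complex.I * (Complex.I * grC) = -grC by linear_combination grC * Complex.I_mul_I]
    exact neg_mem mem1
  · exact mem3
  · rw [show Complex.I * grC * grC = Complex.I + Complex.I * grC by
      linear_combination Complex.I * grC_sq]
    exact add_mem mem2 mem3
  · rw [show Complex.I * grC * Complex.I = -grC by linear_combination grC * Complex.I_mul_I]
    exact neg_mem mem1
  · rw [show Complex.I * grC * (Complex.I * grC) = -(1 + grC) by
      linear_combination grC ^ 2 * Complex.I_mul_I - grC_sq]
    exact neg_mem (add_mem mem0 mem1)

lemma SP_mul_mem : ∀ x y : ℂ, x ∈ SP → y ∈ SP → x * y ∈ SP := by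
  intro x y hx hy
  simp only [SP, Submodule.mem_span_range_iff_exists_fun] at hx hy
  obtain ⟨f, rfl⟩ := hx
  obtain ⟨g, rfl⟩ := hy
  rw [Finset.sum_mul]
  refine Submodule.sum_mem _ fun i _ => ?_
  rw [Finset.mul_sum]
  refine Submodule.sum_mem _ fun j _ => ?_
  rw [smul_mul_smul_comm]
  exact Submodule.smul_mem _ _ (prods_mem i j)

noncomputable def SA : Subalgebra ℚ ℂ := SP.toSubalgebra mem0 SP_mul_mem

lemma exists_coords (z : ℂ) (hz : z ∈ K) : ∃ g : Fin 4 → ℚ, ∑ i, g i • vC i = z := by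
  have halg : ∀ x ∈ ({Complex.I, (Real.sqrt 5 : ℂ)} : Set ℂ), IsAlgebraic ℚ x := by
    rintro x (rfl | rfl)
    · exact ⟨Polynomial.X^2 + 1, by intro h; simpa using congrArg (fun p => Polynomial.coeff p 0) h,
        by simp [Complex.I_sq]⟩
    · exact ⟨Polynomial.X^2 - Polynomial.C 5, by intro h; simpa using congrArg (fun p => Polynomial.coeff p 0) h,
        by simp [sqrt5C_sq]⟩
  have hK : K.toSubalgebra = Algebra.adjoin ℚ ({Complex.I, (Real.sqrt 5 : ℂ)} : Set ℂ) :=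
    IntermediateField.adjoin_toSubalgebra_of_isAlgebraic halg
  have hle : Algebra.adjoin ℚ ({Complex.I, (Real.sqrt 5 : ℂ)} : Set ℂ) ≤ SA := by
    rw [Algebra.adjoin_le_iff]
    rintro x (rfl | rfl)
    · exact mem2
    · show (Real.sqrt 5 : ℂ) ∈ SP
      have : (Real.sqrt 5 : ℂ) = (2:ℚ) • grC + (-1:ℚ) • (1:ℂ) := by
        unfold grC; push_cast [Rat.smul_def]; ring
      rw [this]
      exact add_mem (Submodule.smul_mem _ _ mem1) (Submodule.smul_mem _ _ mem0)
  have hz' : z ∈ SP := hle (hK ▸ ((IntermediateField.mem_toSubalgebra _ _).2 hz))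
  simpa only [SP, Submodule.mem_span_range_iff_exists_fun] using hz'

lemma phiK_coe : (phiK : ℂ) = grC := rfl
lemma iK_coe : (iK : ℂ) = Complex.I := rfl

lemma phiK_sq : phiK * phiK = phiK + 1 := by
  apply Subtype.coe_injective
  push_cast [phiK_coe]
  linear_combination grC_sq

lemma iK_sq : iK * iK = -1 := by
  apply Subtype.coe_injective
  push_cast [iK_coe]
  simp [Complex.I_mul_I]
lemma irrational_sqrt5 : Irrational (Real.sqrt 5) := by
  simpa using (by norm_num : Nat.Prime 5).irrational_sqrt

lemma rat_indep2 (a b : ℚ) (h : (a : ℝ) + b * ((1 + Real.sqrt 5)/2) = 0) : a = 0 ∧ b = 0 := by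
  by_cases hb : b = 0
  · subst hb
    constructor
    · exact_mod_cast by simpa using h
    · rfl
  · exfalso
    apply irrational_sqrt5
    refine ⟨(-2*a - b)/b, ?_⟩
    have hb' : (b:ℝ) ≠ 0 := by exact_mod_cast hb
    push_cast
    field_simp
    linarith [h]

lemma indepC (g : Fin 4 → ℚ) (h : ∑ i, g i • vC i = 0) : ∀ i, g i = 0 := by
  have hsum : ((g 0 + g 1 * ((1 + Real.sqrt 5)/2) : ℝ) : ℂ)
      + ((g 2 + g 3 * ((1 + Real.sqrt 5)/2) : ℝ) : ℂ) * Complex.I = 0 := by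
    rw [Fin.sum_univ_four] at h
    simp only [vC, Matrix.cons_val_zero, Matrix.cons_val_one, Matrix.head_cons,
      Matrix.cons_val_two, Matrix.tail_cons, Matrix.cons_val_three, Rat.smul_def] at h
    rw [← h]
    unfold grC
    push_cast
    ring
  have h2 : (g 0 + g 1 * ((1 + Real.sqrt 5)/2) : ℝ) = 0 ∧
      (g 2 + g 3 * ((1 + Real.sqrt 5)/2) : ℝ) = 0 := by
    constructor
    · simpa using congrArg Complex.re hsum
    · simpa using congrArg Complex.im hsum
  obtain ⟨h01, h23⟩ := rat_indep2 (g 0) (g 1) (by exact_mod_cast h2.1)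
  obtain ⟨h2', h3'⟩ := rat_indep2 (g 2) (g 3) (by exact_mod_cast h2.2)
  intro i; fin_cases i <;> assumption

noncomputable def vK : Fin 4 → K := ![1, phiK, iK, iK * phiK]

lemma vK_coe : ∀ i, ((vK i : K) : ℂ) = vC i := by
  intro i; fin_cases i <;> rfl

lemma coe_sum_smul (g : Fin 4 → ℚ) : ((∑ i, g i • vK i : K) : ℂ) = ∑ i, g i • vC i := by
  have : ((∑ i, g i • vK i : K) : ℂ) = K.val.toLinearMap (∑ i, g i • vK i) := rfl
  rw [this, map_sum]
  refine Finset.sum_congr rfl fun i _ => ?_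
  rw [map_smul]
  simp [vK_coe]

lemma hindepK : LinearIndependent ℚ vK := by
  rw [Fintype.linearIndependent_iff]
  intro g hg
  apply indepC
  rw [← coe_sum_smul, hg]
  rfl

lemma hspanK : ⊤ ≤ Submodule.span ℚ (Set.range vK) := by
  intro x _
  obtain ⟨g, hg⟩ := exists_coords x.1 x.2
  rw [Submodule.mem_span_range_iff_exists_fun]
  refine ⟨g, Subtype.coe_injective ?_⟩
  show ((∑ i, g i • vK i : K) : ℂ) = (x : ℂ)
  rw [coe_sum_smul, hg]

noncomputable def B : Module.Basis (Fin 4) ℚ K := Module.Basis.mk hindepK hspanK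

instance : Module.Finite ℚ K := Module.Finite.of_basis B

noncomputable def Mmat (g : Fin 4 → ℚ) : Matrix (Fin 4) (Fin 4) ℚ :=
  !![g 0, g 1, -(g 2), -(g 3);
     g 1, g 0 + g 1, -(g 3), -(g 2) - (g 3);
     g 2, g 3, g 0, g 1;
     g 3, g 2 + g 3, g 1, g 0 + g 1]

lemma repr_comb (c : Fin 4 → ℚ) : ⇑(B.repr (∑ i, c i • vK i)) = c := by
  have h : ∑ i, c i • vK i = ∑ i, c i • B i := by
    refine Finset.sum_congr rfl fun i _ => ?_
    rw [show B i = vK i from Module.Basis.mk_apply _ _ i]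
  rw [h, Module.Basis.repr_sum_self]

lemma col_mul (g : Fin 4 → ℚ) (j : Fin 4) :
    (∑ i, g i • vK i) * vK j = ∑ i, Mmat g i j • vK i := by
  apply Subtype.coe_injective
  have h1 : ((((∑ i, g i • vK i) * vK j : K)) : ℂ) = (∑ i, g i • vC i) * vC j := by
    push_cast [coe_sum_smul, vK_coe]
    rfl
  have h2 : ((∑ i, Mmat g i j • vK i : K) : ℂ) = ∑ i, Mmat g i j • vC i :=
    coe_sum_smul _
  show (((∑ i, g i • vK i) * vK j : K) : ℂ) = ((∑ i, Mmat g i j • vK i : K) : ℂ)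
  rw [h1, h2]
  fin_cases j <;>
    norm_num [vC, Mmat, Fin.sum_univ_four, Rat.smul_def, Matrix.cons_val_two, Matrix.cons_val_three, Matrix.head_cons, Matrix.tail_cons]
  · linear_combination (-grC * ↑(g 3) - ↑(g 2)) * Complex.I_sq + (↑(g 1) + Complex.I * ↑(g 3)) * grC_sq + (grC * ↑(g 3) + ↑(g 2)) * Complex.I_sq
  · linear_combination (-↑(g 1) - Complex.I * ↑(g 3)) * grC_sq + (↑(g 1) + Complex.I * ↑(g 3)) * grC_sq + (grC * ↑(g 3) + ↑(g 2)) * Complex.I_sq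
  · linear_combination (↑(g 2) * (grC - 1) + ↑(g 3)) * Complex.I_sq +
      (-↑(g 1) * (1 - Complex.I) + ↑(g 3) * Complex.I ^ 2 - ↑(g 3) * Complex.I) * grC_sq + (↑(g 1) + Complex.I * ↑(g 3)) * grC_sq + (grC * ↑(g 3) + ↑(g 2)) * Complex.I_sq

lemma leftmul_eq (g : Fin 4 → ℚ) :
    Algebra.leftMulMatrix B (∑ i, g i • vK i) = Mmat g := by
  ext i j
  rw [Algebra.leftMulMatrix_eq_repr_mul]
  rw [show B j = vK j from Module.Basis.mk_apply _ _ j]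
  rw [col_mul, repr_comb]

def Nval (a b c d : ℚ) : ℚ :=
  (a^2+b^2+c^2+d^2)^2 + (a^2+b^2+c^2+d^2)*(2*a*b+b^2+2*c*d+d^2)
    - (2*a*b+b^2+2*c*d+d^2)^2

lemma norm_comb (g : Fin 4 → ℚ) :
    Algebra.norm ℚ (∑ i, g i • vK i) = Nval (g 0) (g 1) (g 2) (g 3) := by
  rw [Algebra.norm_eq_matrix_det B, leftmul_eq]
  unfold Mmat Nval
  simp [Matrix.det_succ_row_zero, Fin.sum_univ_succ]
  simp (disch := decide) only [Fin.succAbove_of_castSucc_lt, Fin.succAbove_of_le_castSucc]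
  simp
  ring
lemma Nval_nonneg (a b c d : ℚ) : 0 ≤ Nval a b c d := by
  have hr : Real.sqrt 5 ^ 2 = 5 := Real.sq_sqrt (by norm_num)
  set r := Real.sqrt 5 with hrdef
  have key : ((Nval a b c d : ℚ) : ℝ) =
      (((a:ℝ) + (b:ℝ)*((1+r)/2))^2 + ((c:ℝ) + (d:ℝ)*((1+r)/2))^2) *
      (((a:ℝ) + (b:ℝ)*((1-r)/2))^2 + ((c:ℝ) + (d:ℝ)*((1-r)/2))^2) := by
    unfold Nval
    push_cast
    linear_combination (-(3:ℝ)/16*(d:ℝ)^4 - 1/16*(d:ℝ)^4*r^2 + 1/2*(c:ℝ)*(d:ℝ)^3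
      + 1/2*(c:ℝ)^2*(d:ℝ)^2 - 3/8*(b:ℝ)^2*(d:ℝ)^2 - 1/8*(b:ℝ)^2*(d:ℝ)^2*r^2
      + 1/2*(b:ℝ)^2*(c:ℝ)*(d:ℝ) - 1/2*(b:ℝ)^2*(c:ℝ)^2 - 3/16*(b:ℝ)^4 - 1/16*(b:ℝ)^4*r^2
      + 1/2*(a:ℝ)*(b:ℝ)*(d:ℝ)^2 + 2*(a:ℝ)*(b:ℝ)*(c:ℝ)*(d:ℝ) + 1/2*(a:ℝ)*(b:ℝ)^3
      - 1/2*(a:ℝ)^2*(d:ℝ)^2 + 1/2*(a:ℝ)^2*(b:ℝ)^2) * hr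
  have h2 : (0:ℝ) ≤ ((Nval a b c d : ℚ) : ℝ) := by
    rw [key]; positivity
  exact_mod_cast h2

lemma Nval_flip1 (a b c d : ℚ) : Nval (-a) (-b) c d = Nval a b c d := by unfold Nval; ring
lemma Nval_flip2 (a b c d : ℚ) : Nval a b (-c) (-d) = Nval a b c d := by unfold Nval; ring
lemma Nval_swap (a b c d : ℚ) : Nval c d a b = Nval a b c d := by unfold Nval; ring

-- case lemmas
lemma case_int (a b c d : ℚ) (hu : a^2+b^2+c^2+d^2 ≤ 89/100) : Nval a b c d < 1 := by
  unfold Nval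
  nlinarith [sq_nonneg (2*(2*a*b+b^2+2*c*d+d^2) - (a^2+b^2+c^2+d^2)), sq_nonneg a, sq_nonneg b,
    sq_nonneg c, sq_nonneg d]

lemma case_pp (a b c d : ℚ) (ha1 : 37/100 ≤ a) (ha2 : a ≤ 1/2) (hb1 : 37/100 ≤ b) (hb2 : b ≤ 1/2)
    (hc1 : 37/100 ≤ c) (hc2 : c ≤ 1/2) (hd1 : 37/100 ≤ d) (hd2 : d ≤ 1/2) :
    Nval a b c d < 1 := by
  unfold Nval
  set u := a^2+b^2+c^2+d^2 with hu
  set v := 2*a*b+b^2+2*c*d+d^2 with hv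
  have h1 : u ≤ 1 := by nlinarith
  have h2 : v - u ≥ 17/100 := by
    nlinarith [mul_nonneg (by linarith : (0:ℚ) ≤ a - 37/100) (by linarith : (0:ℚ) ≤ 2*b - a - 24/100),
      mul_nonneg (by linarith : (0:ℚ) ≤ c - 37/100) (by linarith : (0:ℚ) ≤ 2*d - c - 24/100)]
  have h3 : v ≥ 8/10 := by nlinarith
  have hprod : v * (v - u) ≥ 8/10 * (17/100) := by
    calc v * (v-u) ≥ 8/10 * (v - u) := by nlinarith
    _ ≥ 8/10 * (17/100) := by linarith
  nlinarith

lemma case_mm (a b c d : ℚ) (ha1 : -(1/2) ≤ a) (ha2 : a ≤ -(37/100)) (hb1 : 37/100 ≤ b) (hb2 : b ≤ 1/2)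
    (hc1 : -(1/2) ≤ c) (hc2 : c ≤ -(37/100)) (hd1 : 37/100 ≤ d) (hd2 : d ≤ 1/2) :
    Nval a b c d < 1 := by
  unfold Nval
  set u := a^2+b^2+c^2+d^2 with hu
  set v := 2*a*b+b^2+2*c*d+d^2 with hv
  have h1 : u ≤ 1 := by nlinarith
  have h0 : u ≥ 0 := by positivity
  have h2 : v ≤ -(17/100) := by
    nlinarith [mul_nonneg (by linarith : (0:ℚ) ≤ b - 37/100) (by linarith : (0:ℚ) ≤ -(2*a+b) - 24/100),
      mul_nonneg (by linarith : (0:ℚ) ≤ d - 37/100) (by linarith : (0:ℚ) ≤ -(2*c+d) - 24/100)]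
  have h3 : u - v ≥ 17/100 := by linarith
  have hprod : v * (u - v) ≤ -(17/100) * (17/100) := by nlinarith
  nlinarith

lemma case_pm (a b c e : ℚ) (ha1 : 37/100 ≤ a) (ha2 : a ≤ 1/2) (hb1 : 37/100 ≤ b) (hb2 : b ≤ 1/2)
    (hc1 : -(1/2) ≤ c) (hc2 : c ≤ -(37/100)) (he1 : -(63/100) ≤ e) (he2 : e ≤ -(1/2)) :
    Nval a b c e < 1 := by
  unfold Nval
  set u := a^2+b^2+c^2+e^2 with hu
  set v := 2*a*b+b^2+2*c*e+e^2 with hv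
  have h1 : u ≤ 1147/1000 := by nlinarith
  have h0 : u ≥ 0 := by positivity
  have h2 : v - u ≥ 27/100 := by
    nlinarith [mul_nonneg (by linarith : (0:ℚ) ≤ a - 37/100) (by linarith : (0:ℚ) ≤ 2*b - a - 24/100),
      mul_nonneg (by linarith : (0:ℚ) ≤ -c - 37/100) (by linarith : (0:ℚ) ≤ -(2*e - c) - 1/2)]
  have hrw : u^2 + u*v - v^2 = u^2 - u*(v-u) - (v-u)^2 := by ring
  rw [hrw]
  nlinarith [mul_nonneg (by linarith : (0:ℚ) ≤ (v-u) - 27/100) (by linarith : (0:ℚ) ≤ u),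
    sq_nonneg ((v-u) - 27/100)]

lemma key2 (a b c d : ℚ) (ha : |a| ≤ 1/2) (hb : |b| ≤ 1/2) (hc : |c| ≤ 1/2) (hd : |d| ≤ 1/2)
    (hb0 : 0 ≤ b) (hd0 : 0 ≤ d) :
    ∃ m n p q : ℤ, Nval (a - m) (b - n) (c - p) (d - q) < 1 := by
  rw [abs_le] at ha hb hc hd
  rcases le_or_gt (a^2+b^2+c^2+d^2) (89/100) with h | h
  · refine ⟨0, 0, 0, 0, ?_⟩
    push_cast
    rw [sub_zero, sub_zero, sub_zero, sub_zero]
    exact case_int a b c d h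
  · have sa : a^2 ≤ 1/4 := by nlinarith [ha.1, ha.2]
    have sb : b^2 ≤ 1/4 := by nlinarith [hb.1, hb.2]
    have sc : c^2 ≤ 1/4 := by nlinarith [hc.1, hc.2]
    have sd : d^2 ≤ 1/4 := by nlinarith [hd.1, hd.2]
    have ha2 : a^2 > 14/100 := by linarith
    have hb2 : b^2 > 14/100 := by linarith
    have hc2 : c^2 > 14/100 := by linarith
    have hd2 : d^2 > 14/100 := by linarith
    have hb37 : 37/100 < b :=
      lt_of_pow_lt_pow_left₀ 2 hb0 (by norm_num; linarith : (37/100:ℚ)^2 < b^2)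
    have hd37 : 37/100 < d :=
      lt_of_pow_lt_pow_left₀ 2 hd0 (by norm_num; linarith : (37/100:ℚ)^2 < d^2)
    have ha37 : 37/100 < a ∨ a < -(37/100) := by
      rcases le_or_gt 0 a with h' | h'
      · exact Or.inl (lt_of_pow_lt_pow_left₀ 2 h' (by norm_num; linarith : (37/100:ℚ)^2 < a^2))
      · refine Or.inr ?_
        have : 37/100 < -a :=
          lt_of_pow_lt_pow_left₀ 2 (by linarith) (by norm_num; linarith : (37/100:ℚ)^2 < (-a)^2)
        linarith
    have hc37 : 37/100 < c ∨ c < -(37/100) := by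
      rcases le_or_gt 0 c with h' | h'
      · exact Or.inl (lt_of_pow_lt_pow_left₀ 2 h' (by norm_num; linarith : (37/100:ℚ)^2 < c^2))
      · refine Or.inr ?_
        have : 37/100 < -c :=
          lt_of_pow_lt_pow_left₀ 2 (by linarith) (by norm_num; linarith : (37/100:ℚ)^2 < (-c)^2)
        linarith
    rcases ha37 with hA | hA <;> rcases hc37 with hC | hC
    · refine ⟨0, 0, 0, 0, ?_⟩
      push_cast
      rw [sub_zero, sub_zero, sub_zero, sub_zero]
      exact case_pp a b c d (le_of_lt hA) ha.2 (le_of_lt hb37) hb.2 (le_of_lt hC) hc.2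
        (le_of_lt hd37) hd.2
    · refine ⟨0, 0, 0, 1, ?_⟩
      push_cast
      rw [sub_zero, sub_zero, sub_zero]
      exact case_pm a b c (d-1) (le_of_lt hA) ha.2 (le_of_lt hb37) hb.2 hc.1 (le_of_lt hC)
        (by linarith) (by linarith)
    · refine ⟨0, 1, 0, 0, ?_⟩
      push_cast
      rw [sub_zero, sub_zero, sub_zero]
      rw [← Nval_swap]
      exact case_pm c d a (b-1) (le_of_lt hC) hc.2 (le_of_lt hd37) hd.2 ha.1 (le_of_lt hA)
        (by linarith) (by linarith)
    · refine ⟨0, 0, 0, 0, ?_⟩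
      push_cast
      rw [sub_zero, sub_zero, sub_zero, sub_zero]
      exact case_mm a b c d ha.1 (le_of_lt hA) (le_of_lt hb37) hb.2 hc.1 (le_of_lt hC)
        (le_of_lt hd37) hd.2

lemma key0 (a b c d : ℚ) (ha : |a| ≤ 1/2) (hb : |b| ≤ 1/2) (hc : |c| ≤ 1/2) (hd : |d| ≤ 1/2) :
    ∃ m n p q : ℤ, Nval (a - m) (b - n) (c - p) (d - q) < 1 := by
  rcases le_or_gt 0 b with hb0 | hb0 <;> rcases le_or_gt 0 d with hd0 | hd0
  · exact key2 a b c d ha hb hc hd hb0 hd0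
  · obtain ⟨m, n, p, q, h⟩ := key2 a b (-c) (-d) ha hb (by rwa [abs_neg]) (by rwa [abs_neg])
      hb0 (by linarith)
    refine ⟨m, n, -p, -q, ?_⟩
    rw [← Nval_flip2 (a - m) (b - n)]
    convert h using 2 <;> push_cast <;> ring
  · obtain ⟨m, n, p, q, h⟩ := key2 (-a) (-b) c d (by rwa [abs_neg]) (by rwa [abs_neg]) hc hd
      (by linarith) hd0
    refine ⟨-m, -n, p, q, ?_⟩
    rw [← Nval_flip1 (a - (-m : ℤ)) (b - (-n : ℤ))]
    convert h using 2 <;> push_cast <;> ring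
  · obtain ⟨m, n, p, q, h⟩ := key2 (-a) (-b) (-c) (-d) (by rwa [abs_neg]) (by rwa [abs_neg])
      (by rwa [abs_neg]) (by rwa [abs_neg]) (by linarith) (by linarith)
    refine ⟨-m, -n, -p, -q, ?_⟩
    rw [← Nval_flip1 (a - (-m : ℤ)) (b - (-n : ℤ)), ← Nval_flip2]
    convert h using 2 <;> push_cast <;> ring

lemma key (a b c d : ℚ) : ∃ m n p q : ℤ, Nval (a - m) (b - n) (c - p) (d - q) < 1 := by
  obtain ⟨m, n, p, q, h⟩ := key0 (a - round a) (b - round b) (c - round c) (d - round d)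
    (abs_sub_round a) (abs_sub_round b) (abs_sub_round c) (abs_sub_round d)
  refine ⟨round a + m, round b + n, round c + p, round d + q, ?_⟩
  convert h using 2 <;> push_cast <;> ring

lemma mem_Ziphi_comb (m n p q : ℤ) :
    (∑ i, (![(m:ℚ), (n:ℚ), (p:ℚ), (q:ℚ)]) i • vK i) ∈ Ziphi := by
  have hi : iK ∈ Ziphi := Subring.subset_closure (by simp)
  have hp : phiK ∈ Ziphi := Subring.subset_closure (by simp)
  rw [Fin.sum_univ_four]
  simp only [vK, Matrix.cons_val_zero, Matrix.cons_val_one, Matrix.head_cons,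
    Matrix.cons_val_two, Matrix.tail_cons, Matrix.cons_val_three]
  rw [Int.cast_smul_eq_zsmul, Int.cast_smul_eq_zsmul, Int.cast_smul_eq_zsmul,
    Int.cast_smul_eq_zsmul]
  exact add_mem (add_mem (add_mem (zsmul_mem (one_mem _) m) (zsmul_mem hp n))
    (zsmul_mem hi p)) (zsmul_mem (mul_mem hi hp) q)

lemma decomp (α : K) : ∃ g : Fin 4 → ℚ, α = ∑ i, g i • vK i := by
  obtain ⟨g, hg⟩ := exists_coords α.1 α.2
  refine ⟨g, Subtype.coe_injective ?_⟩
  show (α : ℂ) = ((∑ i, g i • vK i : K) : ℂ)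
  rw [coe_sum_smul, hg]

theorem approx (α : K) : ∃ β ∈ Ziphi, |Algebra.norm ℚ (α - β)| < 1 := by
  obtain ⟨g, rfl⟩ := decomp α
  obtain ⟨m, n, p, q, hlt⟩ := key (g 0) (g 1) (g 2) (g 3)
  refine ⟨∑ i, (![(m:ℚ), (n:ℚ), (p:ℚ), (q:ℚ)]) i • vK i, mem_Ziphi_comb m n p q, ?_⟩
  have hsub : (∑ i, g i • vK i) - (∑ i, (![(m:ℚ), (n:ℚ), (p:ℚ), (q:ℚ)]) i • vK i)
      = ∑ i, (fun i => g i - (![(m:ℚ), (n:ℚ), (p:ℚ), (q:ℚ)]) i) i • vK i := by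
    rw [← Finset.sum_sub_distrib]
    exact Finset.sum_congr rfl fun i _ => (sub_smul _ _ _).symm
  rw [hsub, norm_comb]
  rw [abs_of_nonneg (Nval_nonneg _ _ _ _)]
  simpa using hlt

/-- ℤ[i,φ] is norm-Euclidean: every element of K is within norm-distance 1 of ℤ[i,φ];
in particular ℤ[i,φ] is a Euclidean domain with respect to |N_{K/ℚ}|. -/
theorem stmt1 :
    (∀ α : K, ∃ β ∈ Ziphi, |Algebra.norm ℚ (α - β)| < 1) ∧
    (∀ a b : K, a ∈ Ziphi → b ∈ Ziphi → b ≠ 0 →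
      ∃ q ∈ Ziphi, ∃ r ∈ Ziphi,
        a = b * q + r ∧ |Algebra.norm ℚ r| < |Algebra.norm ℚ b|) := by
  refine ⟨approx, ?_⟩
  intro a b ha hb hb0
  obtain ⟨β, hβ, hlt⟩ := approx (a * b⁻¹)
  refine ⟨β, hβ, a - b * β, sub_mem ha (mul_mem hb hβ), by ring, ?_⟩
  have h1 : a - b * β = b * (a * b⁻¹ - β) := by field_simp
  have hN : Algebra.norm ℚ b ≠ 0 := Algebra.norm_ne_zero_iff.2 hb0
  have hpos : 0 < |Algebra.norm ℚ b| := abs_pos.2 hN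
  rw [h1, map_mul, abs_mul]
  calc |Algebra.norm ℚ b| * |Algebra.norm ℚ (a * b⁻¹ - β)|
      < |Algebra.norm ℚ b| * 1 := mul_lt_mul_of_pos_left hlt hpos
    _ = |Algebra.norm ℚ b| := mul_one _
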